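/- arXiv:0909.3907 — 4 statements merged into one kernel-verified Lean document; each statement's English description precedes it below -/
import Mathlib

section
/- For a unit vector |v⟩ in the tensor product H_n ⊗ H_m (with m ≤ n) having Schmidt coefficients α_1 ≥ α_2 ≥ ... ≥ α_m, the k-th vector norm ‖|v⟩‖_{s(k)} := sup{ |⟨w|v⟩| : ‖|w⟩‖=1, SR(|w⟩) ≤ k } equals sqrt(Σ_{i=1}^k α_i²). -/
noncomputable section
open scoped BigOperators
set_option linter.unusedSectionVars false
set_option maxHeartbeats 1000000

/-- Inner product (conjugate-linear in the first argument). -/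
def ip {ι : Type*} [Fintype ι] (w v : ι → ℂ) : ℂ := ∑ p, star (w p) * v p

/-- Euclidean norm. -/
def nrm {ι : Type*} [Fintype ι] (v : ι → ℂ) : ℝ := Real.sqrt (ip v v).re

/-- Elementary tensor (product vector). -/
def prodVec {n m : ℕ} (a : Fin n → ℂ) (b : Fin m → ℂ) : Fin n × Fin m → ℂ :=
  fun p => a p.1 * b p.2

/-- Schmidt rank at most `k`: `v` is a sum of `k` product vectors. -/
def SRle {n m : ℕ} (k : ℕ) (v : Fin n × Fin m → ℂ) : Prop :=
  ∃ (a : Fin k → Fin n → ℂ) (b : Fin k → Fin m → ℂ), v = ∑ i, prodVec (a i) (b i)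

/-- The `k`-th vector norm. -/
def vecNorm {n m : ℕ} (k : ℕ) (v : Fin n × Fin m → ℂ) : ℝ :=
  sSup {r | ∃ w, nrm w = 1 ∧ SRle k w ∧ r = ‖ip w v‖}

/-- The `k`-th operator norm. -/
def opNorm {n m : ℕ} (k : ℕ) (X : Matrix (Fin n × Fin m) (Fin n × Fin m) ℂ) : ℝ :=
  sSup {r | ∃ v w, nrm v = 1 ∧ nrm w = 1 ∧ SRle k v ∧ SRle k w ∧
    r = ‖ip w (X.mulVec v)‖}

/-- Rank-one operator `|w⟩⟨v|`. -/
def outer {ι : Type*} (w v : ι → ℂ) : Matrix ι ι ℂ := Matrix.of fun p q => w p * star (v q)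

/-- `k`-block positivity. -/
def BlockPos {n m : ℕ} (k : ℕ) (Y : Matrix (Fin n × Fin m) (Fin n × Fin m) ℂ) : Prop :=
  ∀ v : Fin n × Fin m → ℂ, nrm v = 1 → SRle k v → 0 ≤ (ip v (Y.mulVec v)).re

/-- Schmidt number at most `k`. -/
def SNle {n m : ℕ} (k : ℕ) (ρ : Matrix (Fin n × Fin m) (Fin n × Fin m) ℂ) : Prop :=
  ∃ (N : ℕ) (p : Fin N → ℝ) (v : Fin N → Fin n × Fin m → ℂ),
    (∀ i, 0 ≤ p i) ∧ (∑ i, p i) = 1 ∧ (∀ i, nrm (v i) = 1) ∧ (∀ i, SRle k (v i)) ∧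
    ρ = ∑ i, (p i : ℂ) • outer (v i) (v i)

namespace Stmt0Aux
open Finset

variable {ι κ : Type*} [Fintype ι] [Fintype κ]

lemma ip_eq_inner (x y : ι → ℂ) :
    ip x y = @inner ℂ (EuclideanSpace ℂ ι) _ (WithLp.toLp 2 x) (WithLp.toLp 2 y) := by
  simp [ip, PiLp.inner_apply, RCLike.inner_apply, mul_comm]

lemma ip_self_re_eq (x : ι → ℂ) :
    (ip x x).re = ‖(WithLp.toLp 2 x : EuclideanSpace ℂ ι)‖ ^ 2 := by
  rw [ip_eq_inner]
  exact inner_self_eq_norm_sq (𝕜 := ℂ) _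

lemma nrm_one_iff (x : ι → ℂ) : nrm x = 1 ↔ (ip x x).re = 1 := by
  rw [nrm, Real.sqrt_eq_one]

lemma ip_sum_left (s : Finset κ) (f : κ → ι → ℂ) (y : ι → ℂ) :
    ip (∑ i ∈ s, f i) y = ∑ i ∈ s, ip (f i) y := by
  simp only [ip, Finset.sum_apply, star_sum, Finset.sum_mul]
  exact Finset.sum_comm

lemma ip_sum_right (s : Finset κ) (x : ι → ℂ) (g : κ → ι → ℂ) :
    ip x (∑ i ∈ s, g i) = ∑ i ∈ s, ip x (g i) := by
  simp only [ip, Finset.sum_apply, Finset.mul_sum]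
  exact Finset.sum_comm

lemma ip_smul_left (x : ℂ) (f g : ι → ℂ) : ip (x • f) g = star x * ip f g := by
  simp [ip, Finset.mul_sum, mul_assoc]

lemma ip_smul_right (x : ℂ) (f g : ι → ℂ) : ip f (x • g) = x * ip f g := by
  simp only [ip, Pi.smul_apply, smul_eq_mul, Finset.mul_sum]
  congr 1; ext p; ring

lemma ip_star (x y : ι → ℂ) : ip x y = star (ip y x) := by
  simp [ip, star_sum, mul_comm]

lemma ip_comm_abs (x y : ι → ℂ) : ‖ip x y‖ = ‖ip y x‖ := by
  rw [ip_star]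
  exact Complex.norm_conj _

lemma ip_prod {n m : ℕ} (a c : Fin n → ℂ) (b d : Fin m → ℂ) :
    ip (prodVec a b) (prodVec c d) = ip a c * ip b d := by
  simp only [ip, prodVec, Fintype.sum_prod_type, Finset.sum_mul_sum]
  refine Finset.sum_congr rfl fun p _ => Finset.sum_congr rfl fun q _ => ?_
  simp [star_mul']; ring

lemma bessel [DecidableEq κ] (f : κ → ι → ℂ)
    (hf : ∀ i j, ip (f i) (f j) = if i = j then 1 else 0) (x : ι → ℂ) :
    ∑ i, ‖ip (f i) x‖ ^ 2 ≤ (ip x x).re := by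
  classical
  have hON : Orthonormal ℂ (fun i => (WithLp.toLp 2 (f i) : EuclideanSpace ℂ ι)) := by
    rw [orthonormal_iff_ite]
    intro i j
    rw [← ip_eq_inner]
    exact hf i j
  have h := hON.sum_inner_products_le (s := Finset.univ)
    (x := (WithLp.toLp 2 x : EuclideanSpace ℂ ι))
  rw [ip_self_re_eq]
  refine le_trans (le_of_eq ?_) h
  refine Finset.sum_congr rfl fun i _ => ?_
  rw [ip_eq_inner]

lemma filter_eq_map {m k : ℕ} (hkm : k ≤ m) :
    Finset.univ.filter (fun i : Fin m => (i : ℕ) < k)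
      = Finset.univ.map (Fin.castLEEmb hkm) := by
  ext i
  simp only [Finset.mem_filter, Finset.mem_univ, true_and, Finset.mem_map,
    Fin.castLEEmb_apply]
  constructor
  · intro h
    exact ⟨⟨(i : ℕ), h⟩, by ext; simp⟩
  · rintro ⟨t, rfl⟩
    exact t.2

lemma card_filter_lt {m k : ℕ} (hkm : k ≤ m) :
    (Finset.univ.filter (fun i : Fin m => (i : ℕ) < k)).card = k := by
  rw [filter_eq_map hkm, Finset.card_map, Finset.card_univ, Fintype.card_fin]

lemma sum_filter_lt {m k : ℕ} (hkm : k ≤ m) (f : Fin m → ℝ) :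
    ∑ i ∈ Finset.univ.filter (fun i : Fin m => (i : ℕ) < k), f i
      = ∑ t : Fin k, f (Fin.castLE hkm t) := by
  rw [filter_eq_map hkm, Finset.sum_map]
  rfl

lemma comb {m k : ℕ} (hk1 : 1 ≤ k) (hkm : k ≤ m) (α : Fin m → ℝ) (hα : ∀ i, 0 ≤ α i)
    (hdec : ∀ i j : Fin m, i ≤ j → α j ≤ α i) (t : Fin m → ℝ)
    (ht0 : ∀ i, 0 ≤ t i) (ht1 : ∀ i, t i ≤ 1) (hts : ∑ i, t i ≤ (k : ℝ)) :
    ∑ i, α i ^ 2 * t i ≤ ∑ i ∈ Finset.univ.filter (fun i : Fin m => (i : ℕ) < k), α i ^ 2 := by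
  classical
  set j0 : Fin m := ⟨k - 1, by omega⟩ with hj0
  set β : ℝ := α j0 ^ 2 with hβ
  have hβ0 : 0 ≤ β := sq_nonneg _
  have key1 : ∀ i : Fin m, (i : ℕ) < k → α i ^ 2 * t i ≤ α i ^ 2 + β * (t i - 1) := by
    intro i hi
    have hle : i ≤ j0 := by
      rw [Fin.le_def]; simp only [hj0]; omega
    have : β ≤ α i ^ 2 := pow_le_pow_left₀ (hα j0) (hdec i j0 hle) 2
    nlinarith [ht1 i]
  have key2 : ∀ i : Fin m, ¬ (i : ℕ) < k → α i ^ 2 * t i ≤ β * t i := by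
    intro i hi
    have hle : j0 ≤ i := by
      rw [Fin.le_def]; simp only [hj0]; omega
    have : α i ^ 2 ≤ β := pow_le_pow_left₀ (hα i) (hdec j0 i hle) 2
    nlinarith [ht0 i]
  rw [← Finset.sum_filter_add_sum_filter_not Finset.univ (fun i : Fin m => (i : ℕ) < k)
    (fun i => α i ^ 2 * t i)]
  have h1 : ∑ i ∈ Finset.univ.filter (fun i : Fin m => (i : ℕ) < k), α i ^ 2 * t i
      ≤ ∑ i ∈ Finset.univ.filter (fun i : Fin m => (i : ℕ) < k), (α i ^ 2 + β * (t i - 1)) :=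
    Finset.sum_le_sum fun i hi => key1 i (Finset.mem_filter.mp hi).2
  have h2 : ∑ i ∈ Finset.univ.filter (fun i : Fin m => ¬ (i : ℕ) < k), α i ^ 2 * t i
      ≤ ∑ i ∈ Finset.univ.filter (fun i : Fin m => ¬ (i : ℕ) < k), β * t i :=
    Finset.sum_le_sum fun i hi => key2 i (Finset.mem_filter.mp hi).2
  have hsplit : ∑ i ∈ Finset.univ.filter (fun i : Fin m => (i : ℕ) < k), (α i ^ 2 + β * (t i - 1))
      + ∑ i ∈ Finset.univ.filter (fun i : Fin m => ¬ (i : ℕ) < k), β * t i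
      ≤ ∑ i ∈ Finset.univ.filter (fun i : Fin m => (i : ℕ) < k), α i ^ 2 := by
    have hcard := card_filter_lt (m := m) hkm
    have e1 : ∑ i ∈ Finset.univ.filter (fun i : Fin m => (i : ℕ) < k), (α i ^ 2 + β * (t i - 1))
        = (∑ i ∈ Finset.univ.filter (fun i : Fin m => (i : ℕ) < k), α i ^ 2)
          + (∑ i ∈ Finset.univ.filter (fun i : Fin m => (i : ℕ) < k), β * t i) - β * k := by
      rw [Finset.sum_add_distrib]
      have : ∑ i ∈ Finset.univ.filter (fun i : Fin m => (i : ℕ) < k), β * (t i - 1)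
          = (∑ i ∈ Finset.univ.filter (fun i : Fin m => (i : ℕ) < k), β * t i) - β * k := by
        have hrw : ∀ x : ℝ, β * (x - 1) = β * x - β := fun x => by ring
        simp only [hrw, Finset.sum_sub_distrib, Finset.sum_const, nsmul_eq_mul, hcard]
        ring
      rw [this]; ring
    rw [e1]
    have e2 : (∑ i ∈ Finset.univ.filter (fun i : Fin m => (i : ℕ) < k), β * t i)
        + ∑ i ∈ Finset.univ.filter (fun i : Fin m => ¬ (i : ℕ) < k), β * t i = β * ∑ i, t i := by
      rw [Finset.sum_filter_add_sum_filter_not, Finset.mul_sum]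
    have : β * ∑ i, t i ≤ β * k := mul_le_mul_of_nonneg_left hts hβ0
    linarith
  linarith

lemma core_bound {n m k d : ℕ} (hk1 : 1 ≤ k) (hkm : k ≤ m) (hdk : d ≤ k)
    (u : Fin m → Fin n → ℂ) (w : Fin m → Fin m → ℂ) (α : Fin m → ℝ)
    (hu : ∀ i j, ip (u i) (u j) = if i = j then 1 else 0)
    (hw : ∀ i j, ip (w i) (w j) = if i = j then 1 else 0)
    (hα : ∀ i, 0 ≤ α i) (hdec : ∀ i j : Fin m, i ≤ j → α j ≤ α i)
    (v : Fin n × Fin m → ℂ)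
    (hv : v = ∑ i, (α i : ℂ) • prodVec (u i) (w i))
    (e : Fin d → Fin n → ℂ)
    (he : ∀ s t, ip (e s) (e t) = if s = t then 1 else 0)
    (c : Fin d → Fin m → ℂ)
    (hW : nrm (∑ s, prodVec (e s) (c s)) = 1) :
    ‖ip (∑ s, prodVec (e s) (c s)) v‖
      ≤ Real.sqrt (∑ i ∈ Finset.univ.filter (fun i : Fin m => (i : ℕ) < k), α i ^ 2) := by
  classical
  have hipWv : ip (∑ s, prodVec (e s) (c s)) v
      = ∑ i, (α i : ℂ) * (∑ s, ip (e s) (u i) * ip (c s) (w i)) := by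
    rw [hv, ip_sum_left]
    simp only [ip_sum_right, ip_smul_right, ip_prod]
    rw [Finset.sum_comm]
    exact Finset.sum_congr rfl fun i _ => by rw [Finset.mul_sum]
  set A : Fin d → Fin m → ℝ := fun s i => ‖ip (e s) (u i)‖ with hA
  set B : Fin d → Fin m → ℝ := fun s i => ‖ip (c s) (w i)‖ with hB
  set p : Fin m → ℝ := fun i => Real.sqrt (∑ s, A s i ^ 2) with hp
  set q : Fin m → ℝ := fun i => Real.sqrt (∑ s, B s i ^ 2) with hq
  have step1 : ‖ip (∑ s, prodVec (e s) (c s)) v‖ ≤ ∑ i, α i * (p i * q i) := by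
    rw [hipWv]
    refine le_trans (norm_sum_le _ _) (Finset.sum_le_sum fun i _ => ?_)
    rw [norm_mul, Complex.norm_real, Real.norm_of_nonneg (hα i)]
    refine mul_le_mul_of_nonneg_left ?_ (hα i)
    refine le_trans (norm_sum_le _ _) ?_
    refine le_trans (le_of_eq ?_) (Real.sum_mul_le_sqrt_mul_sqrt Finset.univ (fun s => A s i)
      (fun s => B s i))
    exact Finset.sum_congr rfl fun s _ => by rw [norm_mul]
  have step2 : ∑ i, α i * (p i * q i)
      ≤ Real.sqrt (∑ i, (α i * p i) ^ 2) * Real.sqrt (∑ i, q i ^ 2) := by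
    refine le_trans (le_of_eq ?_) (Real.sum_mul_le_sqrt_mul_sqrt Finset.univ
      (fun i => α i * p i) q)
    exact Finset.sum_congr rfl fun i _ => by ring
  have hpsq : ∀ i, p i ^ 2 = ∑ s, A s i ^ 2 := fun i =>
    Real.sq_sqrt (Finset.sum_nonneg fun s _ => sq_nonneg _)
  have hqsq : ∀ i, q i ^ 2 = ∑ s, B s i ^ 2 := fun i =>
    Real.sq_sqrt (Finset.sum_nonneg fun s _ => sq_nonneg _)
  have ht1 : ∀ i, p i ^ 2 ≤ 1 := by
    intro i
    rw [hpsq]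
    have := bessel e he (u i)
    rwa [hu i i, if_pos rfl, Complex.one_re] at this
  have hts : ∑ i, p i ^ 2 ≤ (k : ℝ) := by
    calc ∑ i, p i ^ 2 = ∑ s, ∑ i, A s i ^ 2 := by
          simp only [hpsq]; exact Finset.sum_comm
      _ ≤ ∑ _s : Fin d, (1 : ℝ) := by
          refine Finset.sum_le_sum fun s _ => ?_
          have := bessel u hu (e s)
          rw [he s s, if_pos rfl, Complex.one_re] at this
          refine le_trans (le_of_eq (Finset.sum_congr rfl fun i _ => ?_)) this
          rw [hA]; simp only
          rw [ip_comm_abs]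
      _ = (d : ℝ) := by simp
      _ ≤ (k : ℝ) := by exact_mod_cast hdk
  have hcs : ∑ s, (ip (c s) (c s)).re = 1 := by
    have h1 : ip (∑ s, prodVec (e s) (c s)) (∑ s, prodVec (e s) (c s))
        = ∑ s, ip (c s) (c s) := by
      rw [ip_sum_left]
      simp only [ip_sum_right, ip_prod, he]
      simp [Finset.sum_ite_eq, Finset.mul_sum]
    have h2 := (nrm_one_iff _).mp hW
    rw [h1] at h2
    rw [← h2, Complex.re_sum]
  have hqs : ∑ i, q i ^ 2 ≤ 1 := by
    calc ∑ i, q i ^ 2 = ∑ s, ∑ i, B s i ^ 2 := by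
          simp only [hqsq]; exact Finset.sum_comm
      _ ≤ ∑ s, (ip (c s) (c s)).re := by
          refine Finset.sum_le_sum fun s _ => ?_
          have := bessel w hw (c s)
          refine le_trans (le_of_eq (Finset.sum_congr rfl fun i _ => ?_)) this
          rw [hB]; simp only
          rw [ip_comm_abs]
      _ = 1 := hcs
  have habs : Real.sqrt (∑ i, q i ^ 2) ≤ 1 := by
    rw [show (1:ℝ) = Real.sqrt 1 by simp]
    exact Real.sqrt_le_sqrt hqs
  have hfin : ∑ i, (α i * p i) ^ 2
      ≤ ∑ i ∈ Finset.univ.filter (fun i : Fin m => (i : ℕ) < k), α i ^ 2 := by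
    have e3 : ∑ i, (α i * p i) ^ 2 = ∑ i, α i ^ 2 * p i ^ 2 :=
      Finset.sum_congr rfl fun i _ => by ring
    rw [e3]
    exact comb hk1 hkm α hα hdec (fun i => p i ^ 2) (fun i => sq_nonneg _) ht1 hts
  calc ‖ip (∑ s, prodVec (e s) (c s)) v‖ ≤ ∑ i, α i * (p i * q i) := step1
    _ ≤ Real.sqrt (∑ i, (α i * p i) ^ 2) * Real.sqrt (∑ i, q i ^ 2) := step2
    _ ≤ Real.sqrt (∑ i, (α i * p i) ^ 2) * 1 :=
        mul_le_mul_of_nonneg_left habs (Real.sqrt_nonneg _)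
    _ = Real.sqrt (∑ i, (α i * p i) ^ 2) := mul_one _
    _ ≤ _ := Real.sqrt_le_sqrt hfin

lemma reduce {n m k : ℕ} (w0 : Fin n × Fin m → ℂ) (h : SRle k w0) :
    ∃ (d : ℕ) (e : Fin d → Fin n → ℂ) (c : Fin d → Fin m → ℂ),
      d ≤ k ∧ (∀ s t, ip (e s) (e t) = if s = t then 1 else 0) ∧
      w0 = ∑ s, prodVec (e s) (c s) := by
  classical
  obtain ⟨a, b, rfl⟩ := h
  set a' : Fin k → EuclideanSpace ℂ (Fin n) := fun t => WithLp.toLp 2 (a t) with ha'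
  set E := Submodule.span ℂ (Set.range a') with hE
  haveI : FiniteDimensional ℂ E := FiniteDimensional.span_of_finite ℂ (Set.finite_range a')
  set d := Module.finrank ℂ E with hd
  have hdk : d ≤ k := by
    have := finrank_range_le_card (R := ℂ) a'
    simpa [Set.finrank, ← hE, ← hd] using this
  set onb := stdOrthonormalBasis ℂ E with honb
  set e : Fin d → Fin n → ℂ := fun s => ((onb s : E) : EuclideanSpace ℂ (Fin n)) with he'
  have he : ∀ s t, ip (e s) (e t) = if s = t then 1 else 0 := by
    intro s t
    rw [ip_eq_inner]
    have := orthonormal_iff_ite.mp onb.orthonormal s t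
    rw [← this]
    rfl
  have hmem : ∀ t, a' t ∈ E := fun t => Submodule.subset_span ⟨t, rfl⟩
  set lam : Fin k → Fin d → ℂ := fun t s => onb.repr ⟨a' t, hmem t⟩ s with hlam
  have ha : ∀ t, a t = fun p => ∑ s, lam t s * e s p := by
    intro t
    have h1 := onb.sum_repr ⟨a' t, hmem t⟩
    have h2 := congrArg (Subtype.val) h1
    rw [AddSubmonoidClass.coe_finset_sum] at h2
    have h3 : (∑ s, lam t s • WithLp.toLp 2 (e s) : EuclideanSpace ℂ (Fin n)) = a' t :=
      calc (∑ s, lam t s • WithLp.toLp 2 (e s) : EuclideanSpace ℂ (Fin n))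
          = ∑ i, ((onb.repr ⟨a' t, hmem t⟩ i • onb i : E) : EuclideanSpace ℂ (Fin n)) :=
            Finset.sum_congr rfl fun s _ => rfl
        _ = ((⟨a' t, hmem t⟩ : E) : EuclideanSpace ℂ (Fin n)) := h2
        _ = a' t := rfl
    funext p
    have h4 : (∑ s, lam t s • e s : Fin n → ℂ) = a t := by
      have h5 := congrArg WithLp.ofLp h3
      simp only [WithLp.ofLp_sum, WithLp.ofLp_smul, WithLp.ofLp_toLp, ha'] at h5
      exact h5
    rw [← h4]
    simp [Finset.sum_apply]
  refine ⟨d, e, fun s q => ∑ t, lam t s * b t q, hdk, he, ?_⟩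
  funext pq
  simp only [Finset.sum_apply, prodVec]
  calc ∑ t, a t pq.1 * b t pq.2 = ∑ t, ∑ s, (lam t s * e s pq.1) * b t pq.2 := by
        refine Finset.sum_congr rfl fun t _ => ?_
        rw [ha t]
        rw [Finset.sum_mul]
    _ = ∑ s, e s pq.1 * ∑ t, lam t s * b t pq.2 := by
        rw [Finset.sum_comm]
        refine Finset.sum_congr rfl fun s _ => ?_
        rw [Finset.mul_sum]
        refine Finset.sum_congr rfl fun t _ => by ring


lemma smul_prodVec {n m : ℕ} (z : ℂ) (a : Fin n → ℂ) (b : Fin m → ℂ) :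
    prodVec (z • a) b = z • prodVec a b := by
  funext p
  simp [prodVec, mul_assoc]

lemma ip_smul_prod_same {n m : ℕ} {κ : Type*} [Fintype κ] [DecidableEq κ]
    (u' : κ → Fin n → ℂ) (w' : κ → Fin m → ℂ)
    (hu' : ∀ i j, ip (u' i) (u' j) = if i = j then 1 else 0)
    (hw' : ∀ i j, ip (w' i) (w' j) = if i = j then 1 else 0)
    (x y : κ → ℂ) :
    ip (∑ i, x i • prodVec (u' i) (w' i)) (∑ j, y j • prodVec (u' j) (w' j))
      = ∑ i, star (x i) * y i := by
  rw [ip_sum_left]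
  simp only [ip_sum_right, ip_smul_left, ip_smul_right, ip_prod, hu', hw']
  refine Finset.sum_congr rfl fun i _ => ?_
  simp [mul_ite, ite_mul, Finset.sum_ite_eq, mul_comm, mul_assoc]

lemma ip_smul_prod_mixed {n m k' : ℕ} (u' : Fin m → Fin n → ℂ) (w' : Fin m → Fin m → ℂ)
    (hu' : ∀ i j, ip (u' i) (u' j) = if i = j then 1 else 0)
    (hw' : ∀ i j, ip (w' i) (w' j) = if i = j then 1 else 0)
    (g : Fin k' → Fin m) (x : Fin k' → ℂ) (y : Fin m → ℂ) :
    ip (∑ t, x t • prodVec (u' (g t)) (w' (g t))) (∑ i, y i • prodVec (u' i) (w' i))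
      = ∑ t, star (x t) * y (g t) := by
  rw [ip_sum_left]
  simp only [ip_sum_right, ip_smul_left, ip_smul_right, ip_prod, hu', hw']
  refine Finset.sum_congr rfl fun t _ => ?_
  simp [mul_ite, ite_mul, Finset.sum_ite_eq, mul_comm, mul_assoc]

end Stmt0Aux

open Stmt0Aux in
/-- the k-th vector norm equals the square root of the sum of the
k largest squared Schmidt coefficients. -/
theorem stmt0 {n m k : ℕ} (hmn : m ≤ n) (hk1 : 1 ≤ k) (hkm : k ≤ m)
    (v : Fin n × Fin m → ℂ) (u : Fin m → Fin n → ℂ) (w : Fin m → Fin m → ℂ)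
    (α : Fin m → ℝ)
    (hu : ∀ i j, ip (u i) (u j) = if i = j then 1 else 0)
    (hw : ∀ i j, ip (w i) (w j) = if i = j then 1 else 0)
    (hα : ∀ i, 0 ≤ α i) (hdec : ∀ i j : Fin m, i ≤ j → α j ≤ α i)
    (hv : v = fun p => ∑ i, (α i : ℂ) * u i p.1 * w i p.2)
    (hnv : nrm v = 1) :
    vecNorm k v =
      Real.sqrt (∑ i ∈ Finset.univ.filter (fun i : Fin m => (i : ℕ) < k), α i ^ 2) := by
  classical
  set S : ℝ := ∑ i ∈ Finset.univ.filter (fun i : Fin m => (i : ℕ) < k), α i ^ 2 with hS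
  have hv' : v = ∑ i, (α i : ℂ) • prodVec (u i) (w i) := by
    rw [hv]
    funext p
    simp only [Finset.sum_apply, Pi.smul_apply, prodVec, smul_eq_mul]
    exact Finset.sum_congr rfl fun i _ => by ring
  -- ∑ α² = 1
  have hipvv : (ip v v).re = ∑ i, α i ^ 2 := by
    have h1 : ip v v = ∑ i, star ((α i : ℂ)) * (α i : ℂ) := by
      rw [hv']
      exact ip_smul_prod_same u w hu hw _ _
    rw [h1, Complex.re_sum]
    refine Finset.sum_congr rfl fun i _ => ?_
    simp [Complex.star_def, Complex.conj_ofReal, ← Complex.ofReal_mul, sq]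
  have hsum1 : ∑ i, α i ^ 2 = 1 := by
    rw [← hipvv]
    exact (nrm_one_iff v).mp hnv
  have hm0 : 0 < m := by omega
  -- S > 0
  have hS0 : 0 < S := by
    rcases lt_or_ge 0 S with h | h
    · exact h
    exfalso
    have hSnn : 0 ≤ S :=
      Finset.sum_nonneg fun i _ => sq_nonneg _
    have hSz : S = 0 := le_antisymm h hSnn
    have hall := (Finset.sum_eq_zero_iff_of_nonneg (fun i _ => sq_nonneg (α i))).mp
      (hS.symm.trans hSz)
    have h0 : α ⟨0, hm0⟩ = 0 := by
      have hmem : (⟨0, hm0⟩ : Fin m) ∈ Finset.univ.filter (fun i : Fin m => (i : ℕ) < k) := by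
        simp; omega
      have := hall ⟨0, hm0⟩ hmem
      exact pow_eq_zero_iff (by norm_num) |>.mp this
    have hz : ∑ i, α i ^ 2 = 0 := by
      refine Finset.sum_eq_zero fun i _ => ?_
      have h1 : α i ≤ α ⟨0, hm0⟩ := hdec ⟨0, hm0⟩ i (by simp [Fin.le_def])
      have h2 := hα i
      nlinarith
    rw [hz] at hsum1
    norm_num at hsum1
  -- the witness
  set cst : Fin k → Fin m := Fin.castLE hkm with hcst
  set x : Fin k → ℝ := fun t => α (cst t) / Real.sqrt S with hx
  set wstar : Fin n × Fin m → ℂ := ∑ t, prodVec ((x t : ℂ) • u (cst t)) (w (cst t)) with hwstar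
  have hws : wstar = ∑ t, (x t : ℂ) • prodVec (u (cst t)) (w (cst t)) := by
    rw [hwstar]
    exact Finset.sum_congr rfl fun t _ => smul_prodVec _ _ _
  have hucst : ∀ s t, ip (u (cst s)) (u (cst t)) = if s = t then 1 else 0 := by
    intro s t
    rw [hu]
    simp [Fin.castLE_inj, hcst]
  have hwcst : ∀ s t, ip (w (cst s)) (w (cst t)) = if s = t then 1 else 0 := by
    intro s t
    rw [hw]
    simp [Fin.castLE_inj, hcst]
  have hsumk : ∑ t, α (cst t) ^ 2 = S := (sum_filter_lt hkm (fun i => α i ^ 2)).symm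
  have hsqS : Real.sqrt S ^ 2 = S := Real.sq_sqrt hS0.le
  have hnws : nrm wstar = 1 := by
    rw [nrm_one_iff]
    have h1 : ip wstar wstar = ∑ t, star ((x t : ℂ)) * (x t : ℂ) := by
      rw [hws]
      exact ip_smul_prod_same _ _ hucst hwcst _ _
    rw [h1, Complex.re_sum]
    have h2 : ∀ t : Fin k, (star ((x t : ℂ)) * (x t : ℂ)).re = x t ^ 2 := by
      intro t
      simp [Complex.star_def, Complex.conj_ofReal, ← Complex.ofReal_mul, sq]
    rw [Finset.sum_congr rfl fun t _ => h2 t]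
    have : ∑ t, x t ^ 2 = (∑ t, α (cst t) ^ 2) / S := by
      rw [Finset.sum_div]
      refine Finset.sum_congr rfl fun t _ => ?_
      rw [hx]
      simp only
      rw [div_pow, hsqS]
    rw [this, hsumk, div_self hS0.ne']
  have hipwsv : ip wstar v = ((Real.sqrt S : ℝ) : ℂ) := by
    have h1 : ip wstar v = ∑ t, star ((x t : ℂ)) * (α (cst t) : ℂ) := by
      rw [hws, hv']
      exact ip_smul_prod_mixed u w hu hw cst _ _
    rw [h1]
    have h2 : ∀ t : Fin k, star ((x t : ℂ)) * (α (cst t) : ℂ)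
        = ((x t * α (cst t) : ℝ) : ℂ) := by
      intro t
      simp [Complex.star_def, Complex.conj_ofReal, Complex.ofReal_mul]
    rw [Finset.sum_congr rfl fun t _ => h2 t, ← Complex.ofReal_sum]
    congr 1
    have : ∑ t, x t * α (cst t) = (∑ t, α (cst t) ^ 2) / Real.sqrt S := by
      rw [Finset.sum_div]
      refine Finset.sum_congr rfl fun t _ => ?_
      rw [hx]
      simp only
      ring
    rw [this, hsumk]
    exact Real.div_sqrt
  -- the set
  set T : Set ℝ := {r | ∃ w0, nrm w0 = 1 ∧ SRle k w0 ∧ r = ‖ip w0 v‖} with hT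
  have hub : ∀ r ∈ T, r ≤ Real.sqrt S := by
    rintro r ⟨w0, hn, hsr, rfl⟩
    obtain ⟨d, e, c, hdk, he, rfl⟩ := reduce w0 hsr
    exact core_bound hk1 hkm hdk u w α hu hw hα hdec v hv' e he c hn
  have hmemT : Real.sqrt S ∈ T := by
    refine ⟨wstar, hnws, ⟨fun t => (x t : ℂ) • u (cst t), fun t => w (cst t), hwstar⟩, ?_⟩
    rw [hipwsv, Complex.norm_real, Real.norm_of_nonneg (Real.sqrt_nonneg _)]
  exact le_antisymm (Real.sSup_le hub (Real.sqrt_nonneg _)) (le_csSup ⟨Real.sqrt S, fun r hr => hub r hr⟩ hmemT)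
end
end

section
/- For a rank-one operator X = |w⟩⟨v| on H_n ⊗ H_m with |v⟩, |w⟩ unit vectors, the k-th operator norm satisfies ‖X‖_{S(k)} = ‖|w⟩‖_{s(k)} · ‖|v⟩‖_{s(k)}. -/
noncomputable section
open scoped BigOperators

/-! ### Auxiliary lemmas -/

lemma ip_euclid {ι : Type*} [Fintype ι] (w v : ι → ℂ) :
    ip w v = inner ℂ ((WithLp.equiv 2 (ι → ℂ)).symm w) ((WithLp.equiv 2 (ι → ℂ)).symm v) := by
  simp [ip, PiLp.inner_apply, RCLike.inner_apply, mul_comm]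

lemma nrm_euclid {ι : Type*} [Fintype ι] (v : ι → ℂ) :
    nrm v = ‖(WithLp.equiv 2 (ι → ℂ)).symm v‖ := by
  rw [@norm_eq_sqrt_re_inner ℂ, nrm, ip_euclid]
  rfl

lemma abs_ip_le {ι : Type*} [Fintype ι] (w v : ι → ℂ) :
    ‖ip w v‖ ≤ nrm w * nrm v := by
  rw [ip_euclid, nrm_euclid, nrm_euclid]
  exact norm_inner_le_norm _ _

lemma sSup_mul_set {A B : Set ℝ} (hA : A.Nonempty) (hB : B.Nonempty)
    (hA0 : ∀ x ∈ A, 0 ≤ x) (hB0 : ∀ y ∈ B, 0 ≤ y)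
    (bA : BddAbove A) (bB : BddAbove B) :
    sSup {r | ∃ x ∈ A, ∃ y ∈ B, r = x * y} = sSup A * sSup B := by
  set P := {r | ∃ x ∈ A, ∃ y ∈ B, r = x * y} with hP
  obtain ⟨x0, hx0⟩ := hA
  obtain ⟨y0, hy0⟩ := hB
  have hPne : P.Nonempty := ⟨x0 * y0, x0, hx0, y0, hy0, rfl⟩
  have hsA0 : 0 ≤ sSup A := le_trans (hA0 x0 hx0) (le_csSup bA hx0)
  have hsB0 : 0 ≤ sSup B := le_trans (hB0 y0 hy0) (le_csSup bB hy0)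
  have hbound : ∀ r ∈ P, r ≤ sSup A * sSup B := by
    rintro r ⟨x, hx, y, hy, rfl⟩
    exact mul_le_mul (le_csSup bA hx) (le_csSup bB hy) (hB0 y hy) hsA0
  have hPbdd : BddAbove P := ⟨sSup A * sSup B, hbound⟩
  have key : ∀ x ∈ A, ∀ y ∈ B, x * y ≤ sSup P :=
    fun x hx y hy => le_csSup hPbdd ⟨x, hx, y, hy, rfl⟩
  have hP0 : 0 ≤ sSup P :=
    le_trans (mul_nonneg (hA0 x0 hx0) (hB0 y0 hy0)) (key x0 hx0 y0 hy0)
  have step1 : ∀ x ∈ A, x * sSup B ≤ sSup P := by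
    intro x hx
    rcases eq_or_lt_of_le (hA0 x hx) with h0 | hxpos
    · simp [← h0, hP0]
    · rw [mul_comm, ← le_div_iff₀ hxpos]
      exact csSup_le ⟨y0, hy0⟩ fun y hy => (le_div_iff₀ hxpos).mpr
        (by rw [mul_comm]; exact key x hx y hy)
  have ge : sSup A * sSup B ≤ sSup P := by
    rcases eq_or_lt_of_le hsB0 with h0 | hbpos
    · simp [← h0, hP0]
    · rw [← le_div_iff₀ hbpos]
      exact csSup_le ⟨x0, hx0⟩ fun x hx => (le_div_iff₀ hbpos).mpr (step1 x hx)
  exact le_antisymm (csSup_le hPne hbound) ge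

lemma ip_outer {ι : Type*} [Fintype ι] (w v w' v' : ι → ℂ) :
    ip w' ((outer w v).mulVec v') = ip w' w * ip v v' := by
  simp only [ip, outer, Matrix.mulVec, Matrix.of_apply, dotProduct,
    Finset.mul_sum, Finset.sum_mul]
  rw [Finset.sum_comm]
  exact Finset.sum_congr rfl fun p _ => Finset.sum_congr rfl fun q _ => by ring

lemma ip_conj {ι : Type*} [Fintype ι] (w v : ι → ℂ) : ip w v = star (ip v w) := by
  simp [ip, mul_comm]

lemma abs_ip_comm {ι : Type*} [Fintype ι] (w v : ι → ℂ) :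
    ‖ip w v‖ = ‖ip v w‖ := by
  rw [ip_conj]; exact norm_star _

section basis
variable {n m k : ℕ} (hn : 0 < n) (hm : 0 < m)

def evec (hn : 0 < n) (hm : 0 < m) : Fin n × Fin m → ℂ :=
  fun p => (if p.1 = ⟨0, hn⟩ then 1 else 0) * (if p.2 = ⟨0, hm⟩ then 1 else 0)

lemma evec_nrm : nrm (evec hn hm) = 1 := by
  have : ip (evec hn hm) (evec hn hm) = 1 := by
    rw [ip]
    rw [Finset.sum_eq_single ((⟨0, hn⟩ : Fin n), (⟨0, hm⟩ : Fin m))]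
    · simp [evec]
    · rintro ⟨a, b⟩ _ hne
      simp only [evec]
      by_cases h1 : a = ⟨0, hn⟩ <;> by_cases h2 : b = ⟨0, hm⟩ <;>
        simp_all [Prod.ext_iff]
    · simp
  rw [nrm, this]; norm_num

lemma evec_SRle (hk : 0 < k) : SRle k (evec hn hm) := by
  refine ⟨fun i => if i = ⟨0, hk⟩ then (fun j => if j = ⟨0, hn⟩ then 1 else 0) else 0,
    fun _ j => if j = ⟨0, hm⟩ then 1 else 0, ?_⟩
  funext p
  rw [Finset.sum_apply, Finset.sum_eq_single (⟨0, hk⟩ : Fin k)]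
  · simp [prodVec, evec]
  · intro i _ hne; simp [prodVec, hne]
  · simp
end basis

/-- for a rank-one operator `|w⟩⟨v|`, the k-th operator norm is the
product of the k-th vector norms. -/
theorem stmt3 {n m k : ℕ} (hmn : m ≤ n) (hk1 : 1 ≤ k) (hkm : k ≤ m)
    (v w : Fin n × Fin m → ℂ) (hv : nrm v = 1) (hw : nrm w = 1) :
    opNorm k (outer w v) = vecNorm k w * vecNorm k v := by
  have hm' : 0 < m := lt_of_lt_of_le hk1 hkm
  have hn : 0 < n := lt_of_lt_of_le hm' hmn
  have hk : 0 < k := hk1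
  set A := {r | ∃ u, nrm u = 1 ∧ SRle k u ∧ r = ‖ip u w‖} with hAdef
  set B := {r | ∃ u, nrm u = 1 ∧ SRle k u ∧ r = ‖ip u v‖} with hBdef
  have hset : {r | ∃ v' w', nrm v' = 1 ∧ nrm w' = 1 ∧ SRle k v' ∧ SRle k w' ∧
      r = ‖ip w' ((outer w v).mulVec v')‖} =
      {r | ∃ x ∈ A, ∃ y ∈ B, r = x * y} := by
    ext r
    constructor
    · rintro ⟨v', w', h1, h2, h3, h4, rfl⟩
      exact ⟨_, ⟨w', h2, h4, rfl⟩, _, ⟨v', h1, h3, rfl⟩,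
        by rw [ip_outer, norm_mul, abs_ip_comm v v']⟩
    · rintro ⟨x, ⟨u, hu1, hu2, rfl⟩, y, ⟨u', hu'1, hu'2, rfl⟩, rfl⟩
      exact ⟨u', u, hu'1, hu1, hu'2, hu2,
        by rw [ip_outer, norm_mul, abs_ip_comm v u']⟩
  have hAne : A.Nonempty :=
    ⟨_, evec hn hm', evec_nrm hn hm', evec_SRle hn hm' hk, rfl⟩
  have hBne : B.Nonempty :=
    ⟨_, evec hn hm', evec_nrm hn hm', evec_SRle hn hm' hk, rfl⟩
  have hA0 : ∀ x ∈ A, 0 ≤ x := by rintro x ⟨u, _, _, rfl⟩; exact norm_nonneg _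
  have hB0 : ∀ y ∈ B, 0 ≤ y := by rintro y ⟨u, _, _, rfl⟩; exact norm_nonneg _
  have bA : BddAbove A := by
    refine ⟨1, ?_⟩
    rintro x ⟨u, hu1, _, rfl⟩
    calc ‖ip u w‖ ≤ nrm u * nrm w := abs_ip_le u w
    _ = 1 := by rw [hu1, hw, one_mul]
  have bB : BddAbove B := by
    refine ⟨1, ?_⟩
    rintro y ⟨u, hu1, _, rfl⟩
    calc ‖ip u v‖ ≤ nrm u * nrm v := abs_ip_le u v
    _ = 1 := by rw [hu1, hv, one_mul]
  rw [opNorm, hset, sSup_mul_set hAne hBne hA0 hB0 bA bB, vecNorm, vecNorm]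
end
end

section
/- If X ∈ L(H_n ⊗ H_m) is positive semidefinite, then ‖X‖_{S(k)} = sup{ ⟨v|X|v⟩ : |v⟩ a unit vector with SR(|v⟩) ≤ k } = sup{ Tr(Xρ) : ρ a density operator with Schmidt number SN(ρ) ≤ k }. -/
noncomputable section
open scoped BigOperators ComplexOrder

lemma ip_eq_dot {ι : Type*} [Fintype ι] (w v : ι → ℂ) : ip w v = dotProduct (star w) v := rfl

lemma ip_self_eq {ι : Type*} [Fintype ι] (v : ι → ℂ) :
    ip v v = ((∑ p, Complex.normSq (v p) : ℝ) : ℂ) := by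
  unfold ip
  push_cast
  exact Finset.sum_congr rfl fun p _ => by
    rw [mul_comm, Complex.star_def, Complex.mul_conj]

lemma abs_of_cnonneg {z : ℂ} (hz : 0 ≤ z) : (‖z‖ : ℝ) = z.re := by
  obtain ⟨h1, h2⟩ := Complex.nonneg_iff.mp hz
  rw [Complex.norm_def, Complex.normSq_apply, ← h2]
  simpa using Real.sqrt_mul_self h1

lemma cs_sum {ι : Type*} [Fintype ι] (x y : ι → ℂ) :
    ‖∑ i, star (x i) * y i‖ ≤
      Real.sqrt (∑ i, Complex.normSq (x i)) * Real.sqrt (∑ i, Complex.normSq (y i)) := by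
  let X' : EuclideanSpace ℂ ι := (WithLp.equiv 2 _).symm x
  let Y' : EuclideanSpace ℂ ι := (WithLp.equiv 2 _).symm y
  have h := norm_inner_le_norm (𝕜 := ℂ) X' Y'
  rw [EuclideanSpace.norm_eq, EuclideanSpace.norm_eq] at h
  have hi : (inner ℂ X' Y' : ℂ) = ∑ i, star (x i) * y i := by
    rw [PiLp.inner_apply]
    exact Finset.sum_congr rfl fun i _ => by
      rw [RCLike.inner_apply']; rfl
  rw [hi] at h
  have hx : ∀ i, ‖x i‖ ^ 2 = Complex.normSq (x i) := fun i => by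
    rw [Complex.sq_norm]
  have hy : ∀ i, ‖y i‖ ^ 2 = Complex.normSq (y i) := fun i => by
    rw [Complex.sq_norm]
  calc ‖∑ i, star (x i) * y i‖ = ‖∑ i, star (x i) * y i‖ := rfl
    _ ≤ _ := by
        refine h.trans_eq ?_
        congr 1
        · congr 1; exact Finset.sum_congr rfl fun i _ => hx i
        · congr 1; exact Finset.sum_congr rfl fun i _ => hy i

open Matrix in
lemma psd_cs {d : Type*} [Fintype d] {X : Matrix d d ℂ} (hX : X.PosSemidef) (w v : d → ℂ) :
    ‖ip w (X.mulVec v)‖ ≤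
      Real.sqrt (ip w (X.mulVec w)).re * Real.sqrt (ip v (X.mulVec v)).re := by
  classical
  open scoped MatrixOrder in
  obtain ⟨B, rfl⟩ := CStarAlgebra.nonneg_iff_eq_star_mul_self.mp
    (Matrix.nonneg_iff_posSemidef.mpr hX)
  simp only [star_eq_conjTranspose]
  have key : ∀ u z : d → ℂ, ip u ((Bᴴ * B).mulVec z) = ∑ j, star ((B.mulVec u) j) * (B.mulVec z) j := by
    intro u z
    rw [ip_eq_dot, ← Matrix.mulVec_mulVec, Matrix.dotProduct_mulVec, ← Matrix.star_mulVec]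
    rfl
  have hre : ∀ u : d → ℂ, (ip u ((Bᴴ * B).mulVec u)).re = ∑ j, Complex.normSq ((B.mulVec u) j) := by
    intro u
    rw [key]
    have : (∑ j, star ((B.mulVec u) j) * (B.mulVec u) j) = ip (B.mulVec u) (B.mulVec u) := rfl
    rw [this, ip_self_eq, Complex.ofReal_re]
  rw [key, hre, hre]
  exact cs_sum _ _

lemma outer_posSemidef {ι : Type*} [Fintype ι] [DecidableEq ι] (v : ι → ℂ) :
    (outer v v).PosSemidef := by
  refine Matrix.PosSemidef.of_dotProduct_mulVec_nonneg ?_ ?_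
  · ext p q
    simp [outer, Matrix.conjTranspose_apply, mul_comm]
  · intro x
    have h1 : ∀ p, (outer v v).mulVec x p = v p * ip v x := by
      intro p
      unfold outer Matrix.mulVec dotProduct ip
      simp only [Matrix.of_apply, Finset.mul_sum]
      exact Finset.sum_congr rfl fun q _ => by ring
    have h2 : dotProduct (star x) ((outer v v).mulVec x) = star (ip v x) * ip v x := by
      unfold dotProduct
      simp only [Pi.star_apply, h1]
      rw [show (∑ p, star (x p) * (v p * ip v x)) = (∑ p, star (x p) * v p) * ip v x by
        rw [Finset.sum_mul]; exact Finset.sum_congr rfl fun p _ => by ring]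
      congr 1
      unfold ip
      rw [star_sum]
      exact Finset.sum_congr rfl fun p _ => by
        rw [star_mul]
        simp [mul_comm]
    rw [h2]
    exact star_mul_self_nonneg _

lemma outer_trace {ι : Type*} [Fintype ι] (v : ι → ℂ) : (outer v v).trace = ip v v := by
  unfold outer ip Matrix.trace Matrix.diag
  exact Finset.sum_congr rfl fun p _ => by rw [mul_comm]; rfl

lemma trace_mul_outer {d : Type*} [Fintype d] (X : Matrix d d ℂ) (v : d → ℂ) :
    (X * outer v v).trace = ip v (X.mulVec v) := by
  unfold outer ip Matrix.trace Matrix.diag Matrix.mulVec dotProduct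
  simp only [Matrix.mul_apply, Matrix.of_apply, Finset.mul_sum]
  exact Finset.sum_congr rfl fun p _ => Finset.sum_congr rfl fun q _ => by
    simp; ring

/-- for positive semidefinite `X`, the k-th operator norm is the sup of
`⟨v|X|v⟩` over unit vectors of Schmidt rank at most k, and also the sup of `Tr(Xρ)`
over states of Schmidt number at most k. -/
theorem stmt5 {n m k : ℕ} (hmn : m ≤ n) (hk1 : 1 ≤ k) (hkm : k ≤ m)
    (X : Matrix (Fin n × Fin m) (Fin n × Fin m) ℂ) (hX : X.PosSemidef) :
    opNorm k X = sSup {r | ∃ v : Fin n × Fin m → ℂ,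
        nrm v = 1 ∧ SRle k v ∧ r = (ip v (X.mulVec v)).re} ∧
    opNorm k X = sSup {r | ∃ ρ : Matrix (Fin n × Fin m) (Fin n × Fin m) ℂ,
        ρ.PosSemidef ∧ ρ.trace = 1 ∧ SNle k ρ ∧ r = ((X * ρ).trace).re} := by
  classical
  have hm : 0 < m := lt_of_lt_of_le hk1 hkm
  have hn : 0 < n := lt_of_lt_of_le hm hmn
  set S1 : Set ℝ := {r | ∃ v w, nrm v = 1 ∧ nrm w = 1 ∧ SRle k v ∧ SRle k w ∧
    r = ‖ip w (X.mulVec v)‖} with hS1def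
  set S2 : Set ℝ := {r | ∃ v : Fin n × Fin m → ℂ,
    nrm v = 1 ∧ SRle k v ∧ r = (ip v (X.mulVec v)).re} with hS2def
  set S3 : Set ℝ := {r | ∃ ρ : Matrix (Fin n × Fin m) (Fin n × Fin m) ℂ,
    ρ.PosSemidef ∧ ρ.trace = 1 ∧ SNle k ρ ∧ r = ((X * ρ).trace).re} with hS3def
  -- basic positivity facts
  have hqnn : ∀ v : Fin n × Fin m → ℂ, 0 ≤ ip v (X.mulVec v) := by
    intro v; rw [ip_eq_dot]; exact hX.dotProduct_mulVec_nonneg v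
  have habs : ∀ v : Fin n × Fin m → ℂ,
      ‖ip v (X.mulVec v)‖ = (ip v (X.mulVec v)).re :=
    fun v => abs_of_cnonneg (hqnn v)
  -- norm-one facts
  have ipone : ∀ v : Fin n × Fin m → ℂ, nrm v = 1 → ip v v = 1 := by
    intro v hv
    have h0 : 0 ≤ ∑ p, Complex.normSq (v p) :=
      Finset.sum_nonneg fun _ _ => Complex.normSq_nonneg _
    have hs : Real.sqrt (∑ p, Complex.normSq (v p)) = 1 := by
      unfold nrm at hv
      rw [ip_self_eq, Complex.ofReal_re] at hv
      exact hv
    have : (∑ p, Complex.normSq (v p)) = 1 := by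
      nlinarith [Real.sq_sqrt h0]
    rw [ip_self_eq, this]
    norm_num
  have hcomp : ∀ v : Fin n × Fin m → ℂ, nrm v = 1 → ∀ p, ‖v p‖ ≤ 1 := by
    intro v hv p
    have h1 := ipone v hv
    rw [ip_self_eq] at h1
    have hs : (∑ p, Complex.normSq (v p)) = 1 := by exact_mod_cast h1
    have h2 : Complex.normSq (v p) ≤ 1 := by
      rw [← hs]
      exact Finset.single_le_sum (fun i _ => Complex.normSq_nonneg _) (Finset.mem_univ p)
    have h3 := Complex.sq_norm (v p)
    nlinarith [norm_nonneg (v p)]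
  -- uniform bound
  set Bd : ℝ := ∑ p : Fin n × Fin m, ∑ q : Fin n × Fin m, ‖X p q‖ with hBddef
  have hbd : ∀ w v : Fin n × Fin m → ℂ, nrm w = 1 → nrm v = 1 →
      ‖ip w (X.mulVec v)‖ ≤ Bd := by
    intro w v hw hv
    have e : ip w (X.mulVec v) = ∑ p, star (w p) * (X.mulVec v) p := rfl
    rw [e]
    refine (norm_sum_le _ _).trans ?_
    refine Finset.sum_le_sum fun p _ => ?_
    rw [norm_mul]
    have h1 : ‖star (w p)‖ ≤ 1 := by
      rw [Complex.star_def, Complex.norm_conj]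
      exact hcomp w hw p
    have h2 : ‖(X.mulVec v) p‖ ≤ ∑ q, ‖X p q‖ := by
      have e2 : (X.mulVec v) p = ∑ q, X p q * v q := rfl
      rw [e2]
      refine (norm_sum_le _ _).trans ?_
      refine Finset.sum_le_sum fun q _ => ?_
      rw [norm_mul]
      calc ‖X p q‖ * ‖v q‖
          ≤ ‖X p q‖ * 1 :=
            mul_le_mul_of_nonneg_left (hcomp v hv q) (norm_nonneg _)
        _ = ‖X p q‖ := mul_one _
    calc ‖star (w p)‖ * ‖(X.mulVec v) p‖
        ≤ 1 * (∑ q, ‖X p q‖) :=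
          mul_le_mul h1 h2 (norm_nonneg _) zero_le_one
      _ = ∑ q, ‖X p q‖ := one_mul _
  -- witness vector
  set e1v : Fin n → ℂ := fun i => if i = ⟨0, hn⟩ then 1 else 0 with he1v
  set e2v : Fin m → ℂ := fun j => if j = ⟨0, hm⟩ then 1 else 0 with he2v
  set v0 : Fin n × Fin m → ℂ := prodVec e1v e2v with hv0def
  have hv0ip : ip v0 v0 = 1 := by
    rw [ip_self_eq]
    have : (∑ p : Fin n × Fin m, Complex.normSq (v0 p)) = 1 := by
      rw [Finset.sum_eq_single ((⟨0, hn⟩ : Fin n), (⟨0, hm⟩ : Fin m))]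
      · simp [hv0def, prodVec, he1v, he2v]
      · intro p _ hp
        have hz : v0 p = 0 := by
          by_cases h1 : p.1 = ⟨0, hn⟩
          · have h2 : p.2 ≠ ⟨0, hm⟩ := fun h => hp (Prod.ext h1 h)
            simp [hv0def, prodVec, he2v, h2]
          · simp [hv0def, prodVec, he1v, h1]
        simp [hz]
      · simp
    rw [this]; norm_num
  have hv0n : nrm v0 = 1 := by
    unfold nrm
    rw [hv0ip]
    simp
  have hv0sr : SRle k v0 := by
    refine ⟨fun i => if i = ⟨0, hk1⟩ then e1v else 0, fun _ => e2v, ?_⟩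
    funext p
    rw [Finset.sum_apply]
    rw [Finset.sum_eq_single (⟨0, hk1⟩ : Fin k)]
    · simp [hv0def, prodVec]
    · intro i _ hi
      simp [prodVec, hi]
    · simp
  -- nonemptiness and boundedness
  have ne1 : S1.Nonempty := ⟨_, v0, v0, hv0n, hv0n, hv0sr, hv0sr, rfl⟩
  have ne2 : S2.Nonempty := ⟨_, v0, hv0n, hv0sr, rfl⟩
  have bdd1 : BddAbove S1 := by
    refine ⟨Bd, ?_⟩
    rintro r ⟨v, w, hv, hw, _, _, rfl⟩
    exact hbd w v hw hv
  have bdd2 : BddAbove S2 := by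
    refine ⟨Bd, ?_⟩
    rintro r ⟨v, hv, _, rfl⟩
    rw [← habs v]
    exact hbd v v hv hv
  -- every element of S3 is at most sSup S2
  have hS3le : ∀ r ∈ S3, r ≤ sSup S2 := by
    rintro r ⟨ρ, hP, hT, ⟨N, p, vv, hp0, hp1, hvn, hvs, hρ⟩, rfl⟩
    subst hρ
    have htr : ((X * ∑ i, (p i : ℂ) • outer (vv i) (vv i)).trace).re
        = ∑ i, p i * (ip (vv i) (X.mulVec (vv i))).re := by
      rw [Finset.mul_sum]
      rw [Matrix.trace_sum]
      rw [Complex.re_sum]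
      refine Finset.sum_congr rfl fun i _ => ?_
      rw [Matrix.mul_smul, Matrix.trace_smul, trace_mul_outer]
      rw [smul_eq_mul, Complex.re_ofReal_mul]
    rw [htr]
    calc (∑ i, p i * (ip (vv i) (X.mulVec (vv i))).re)
        ≤ ∑ i, p i * sSup S2 := by
          refine Finset.sum_le_sum fun i _ => ?_
          refine mul_le_mul_of_nonneg_left ?_ (hp0 i)
          exact le_csSup bdd2 ⟨vv i, hvn i, hvs i, rfl⟩
      _ = sSup S2 := by rw [← Finset.sum_mul, hp1, one_mul]
  -- S2 ⊆ S3
  have hsub : S2 ⊆ S3 := by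
    rintro r ⟨v, hv, hs, rfl⟩
    refine ⟨outer v v, outer_posSemidef v, ?_, ?_, (trace_mul_outer X v).symm ▸ rfl⟩
    · rw [outer_trace, ipone v hv]
    · exact ⟨1, fun _ => 1, fun _ => v, fun _ => zero_le_one, by simp, fun _ => hv,
        fun _ => hs, by simp⟩
  have ne3 : S3.Nonempty := ne2.mono hsub
  have bdd3 : BddAbove S3 := ⟨sSup S2, hS3le⟩
  -- first equality
  have e1 : sSup S1 = sSup S2 := by
    refine le_antisymm (csSup_le ne1 ?_) (csSup_le ne2 ?_)
    · rintro r ⟨v, w, hv, hw, hsv, hsw, rfl⟩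
      have h := psd_cs hX w v
      set a := (ip w (X.mulVec w)).re with ha'
      set b := (ip v (X.mulVec v)).re with hb'
      have ha : 0 ≤ a := (Complex.nonneg_iff.mp (hqnn w)).1
      have hb : 0 ≤ b := (Complex.nonneg_iff.mp (hqnn v)).1
      have hw2 : a ≤ sSup S2 := le_csSup bdd2 ⟨w, hw, hsw, rfl⟩
      have hv2 : b ≤ sSup S2 := le_csSup bdd2 ⟨v, hv, hsv, rfl⟩
      have hmax : Real.sqrt a * Real.sqrt b ≤ max a b := by
        rcases le_total a b with hab | hab
        · calc Real.sqrt a * Real.sqrt b ≤ Real.sqrt b * Real.sqrt b :=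
              mul_le_mul_of_nonneg_right (Real.sqrt_le_sqrt hab) (Real.sqrt_nonneg b)
            _ = b := Real.mul_self_sqrt hb
            _ ≤ max a b := le_max_right a b
        · calc Real.sqrt a * Real.sqrt b ≤ Real.sqrt a * Real.sqrt a :=
              mul_le_mul_of_nonneg_left (Real.sqrt_le_sqrt hab) (Real.sqrt_nonneg a)
            _ = a := Real.mul_self_sqrt ha
            _ ≤ max a b := le_max_left a b
      exact h.trans (hmax.trans (max_le hw2 hv2))
    · rintro r ⟨v, hv, hs, rfl⟩
      exact le_csSup bdd1 ⟨v, v, hv, hv, hs, hs, (habs v).symm⟩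
  have e2 : sSup S2 = sSup S3 :=
    le_antisymm (csSup_le ne2 fun r hr => le_csSup bdd3 (hsub hr)) (csSup_le ne3 hS3le)
  exact ⟨e1, e1.trans e2⟩
end
end

section
/- For any X ∈ L(H_n ⊗ H_m) and h ≤ k ≤ m: ‖X‖_{S(h)} ≤ ‖X‖_{S(k)} ≤ (k/h) · ‖X‖_{S(h)}. -/
noncomputable section
open scoped BigOperators

section StmtAux
open Fin.NatCast

section lemmas
variable {ι : Type*} [Fintype ι]

lemma ip_sum_left {κ : Type*} (s : Finset κ) (f : κ → ι → ℂ) (v : ι → ℂ) :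
    ip (∑ i ∈ s, f i) v = ∑ i ∈ s, ip (f i) v := by
  simp [ip, Finset.sum_apply, Finset.sum_mul, star_sum]
  rw [Finset.sum_comm]

lemma ip_sum_right {κ : Type*} (s : Finset κ) (f : κ → ι → ℂ) (v : ι → ℂ) :
    ip v (∑ i ∈ s, f i) = ∑ i ∈ s, ip v (f i) := by
  simp [ip, Finset.sum_apply, Finset.mul_sum]
  rw [Finset.sum_comm]

lemma ip_smul_left (c : ℂ) (w v : ι → ℂ) : ip (c • w) v = star c * ip w v := by
  simp [ip, Finset.mul_sum, mul_assoc]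

lemma ip_smul_right (c : ℂ) (w v : ι → ℂ) : ip w (c • v) = c * ip w v := by
  simp only [ip, Pi.smul_apply, smul_eq_mul, Finset.mul_sum]
  exact Finset.sum_congr rfl fun p _ => by ring

lemma ip_self_re (v : ι → ℂ) : (ip v v).re = ∑ p, Complex.normSq (v p) := by
  rw [ip, Complex.re_sum]
  exact Finset.sum_congr rfl fun p _ => by
    rw [Complex.star_def, ← Complex.normSq_eq_conj_mul_self]; simp

lemma ip_self_re_nonneg (v : ι → ℂ) : 0 ≤ (ip v v).re := by
  rw [ip_self_re]
  exact Finset.sum_nonneg fun p _ => Complex.normSq_nonneg _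

lemma sq_nrm (v : ι → ℂ) : (nrm v) ^ 2 = (ip v v).re := by
  rw [nrm, Real.sq_sqrt (ip_self_re_nonneg v)]

lemma nrm_nonneg (v : ι → ℂ) : 0 ≤ nrm v := Real.sqrt_nonneg _

lemma eq_zero_of_nrm_eq_zero {v : ι → ℂ} (hv : nrm v = 0) : v = 0 := by
  have h2 : (ip v v).re = 0 := by
    have := sq_nrm v; rw [hv] at this; simpa using this.symm
  rw [ip_self_re] at h2
  funext p
  have := (Finset.sum_eq_zero_iff_of_nonneg (fun p _ => Complex.normSq_nonneg (v p))).1 h2 p (Finset.mem_univ p)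
  simpa using this

lemma nrm_smul (c : ℂ) (v : ι → ℂ) : nrm (c • v) = ‖c‖ * nrm v := by
  rw [nrm, nrm, ip_smul_left, ip_smul_right, ← mul_assoc]
  have h1 : (star c * c : ℂ) = ((Complex.normSq c : ℝ) : ℂ) := by
    rw [Complex.star_def, ← Complex.normSq_eq_conj_mul_self]
  rw [h1]
  have h2 : (((Complex.normSq c : ℝ) : ℂ) * ip v v).re = Complex.normSq c * (ip v v).re :=
    Complex.re_ofReal_mul _ _
  rw [h2, Real.sqrt_mul (Complex.normSq_nonneg c), ← Complex.norm_def]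

end lemmas

section Vec
variable {n m : ℕ}

variable {n m : ℕ}

lemma ip_prodVec (a a' : Fin n → ℂ) (b b' : Fin m → ℂ) :
    ip (prodVec a b) (prodVec a' b') = ip a a' * ip b b' := by
  simp only [ip, prodVec, Fintype.sum_prod_type, Finset.sum_mul_sum]
  refine Finset.sum_congr rfl fun i _ => Finset.sum_congr rfl fun j _ => ?_
  simp only [star_mul']
  ring

lemma SRle_smul {k : ℕ} {v : Fin n × Fin m → ℂ} (c : ℂ) (hv : SRle k v) :
    SRle k (c • v) := by
  obtain ⟨a, b, rfl⟩ := hv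
  refine ⟨fun i => c • a i, b, ?_⟩
  rw [Finset.smul_sum]
  refine Finset.sum_congr rfl fun i _ => ?_
  funext p
  simp [prodVec, mul_assoc]

lemma SRle_mono {h k : ℕ} (hhk : h ≤ k) {v : Fin n × Fin m → ℂ} (hv : SRle h v) :
    SRle k v := by
  classical
  obtain ⟨a, b, rfl⟩ := hv
  set A : Fin k → Fin n → ℂ := fun i => if hi : (i : ℕ) < h then a ⟨i, hi⟩ else 0 with hA
  set B : Fin k → Fin m → ℂ := fun i => if hi : (i : ℕ) < h then b ⟨i, hi⟩ else 0 with hB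
  refine ⟨A, B, ?_⟩
  have h1 : ∑ i : Fin h, prodVec (a i) (b i)
      = ∑ i : Fin h, prodVec (A (Fin.castLE hhk i)) (B (Fin.castLE hhk i)) := by
    refine Finset.sum_congr rfl fun i _ => ?_
    have hi : ((Fin.castLE hhk i : Fin k) : ℕ) < h := i.isLt
    rw [hA, hB]
    simp only [dif_pos hi]
    congr 1 <;> exact congrArg _ (by ext; simp) <;> rfl
  have h2 : ∑ i : Fin h, prodVec (A (Fin.castLE hhk i)) (B (Fin.castLE hhk i))
      = ∑ i ∈ Finset.univ.map (Fin.castLEEmb hhk), prodVec (A i) (B i) := by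
    rw [Finset.sum_map]
    rfl
  rw [h1, h2]
  refine Finset.sum_subset (Finset.subset_univ _) ?_
  intro i _ hi
  have : ¬ ((i : ℕ) < h) := by
    intro hlt
    exact hi (Finset.mem_map.2 ⟨⟨(i : ℕ), hlt⟩, Finset.mem_univ _, by simp [Fin.castLEEmb]⟩)
  rw [hA, hB]
  simp only [dif_neg this]
  funext p; simp [prodVec]

lemma inner_eq_ip (x y : EuclideanSpace ℂ (Fin n)) :
    inner ℂ x y = ip (fun p => x p) (fun p => y p) := by
  rw [PiLp.inner_apply, ip]
  exact Finset.sum_congr rfl fun p _ => by rw [RCLike.inner_apply]; exact mul_comm _ _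

lemma euclid_sum_apply {κ : Type*} (s : Finset κ) (f : κ → EuclideanSpace ℂ (Fin n)) (p : Fin n) :
    (∑ j ∈ s, f j) p = ∑ j ∈ s, f j p := by
  classical
  induction s using Finset.induction with
  | empty => rfl
  | insert _ _ hx ih => rw [Finset.sum_insert hx, Finset.sum_insert hx, ← ih]; rfl

lemma ortho_span {E : Type*} [NormedAddCommGroup E] [InnerProductSpace ℂ E]
    [FiniteDimensional ℂ E] {k : ℕ} (a : Fin k → E) :
    ∃ (d : ℕ), d ≤ k ∧ ∃ e : Fin d → E,
      (∀ i j, inner ℂ (e i) (e j) = if i = j then 1 else 0) ∧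
      (∀ i, a i = ∑ j, inner ℂ (e j) (a i) • e j) := by
  classical
  let W : Submodule ℂ E := Submodule.span ℂ (Set.range a)
  have hfin : Module.finrank ℂ W ≤ k := by
    refine (finrank_span_le_card (Set.range a)).trans ?_
    rw [Set.toFinset_card]
    simpa using Fintype.card_range_le a
  let ob := stdOrthonormalBasis ℂ W
  refine ⟨Module.finrank ℂ W, hfin, fun j => ((ob j : W) : E), ?_, ?_⟩
  · intro i j
    rw [← Submodule.coe_inner]
    exact orthonormal_iff_ite.1 ob.orthonormal i j
  · intro i
    have hmem : a i ∈ W := Submodule.subset_span ⟨i, rfl⟩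
    have h1 : ∑ j, ob.repr ⟨a i, hmem⟩ j • ob j = ⟨a i, hmem⟩ := ob.sum_repr _
    have h3 := congrArg (Subtype.val) h1
    rw [Submodule.coe_sum] at h3
    have h4 : ∀ j, (↑(ob.repr ⟨a i, hmem⟩ j • ob j) : E)
        = inner ℂ ((ob j : W) : E) (a i) • ((ob j : W) : E) := fun j => by
      rw [Submodule.coe_smul, ob.repr_apply_apply, Submodule.coe_inner]
    exact h3.symm.trans (Finset.sum_congr rfl fun j _ => h4 j)

lemma ortho_decomp {k : ℕ} {v : Fin n × Fin m → ℂ} (hv : SRle k v) :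
    ∃ (d : ℕ), d ≤ k ∧ ∃ (e : Fin d → Fin n → ℂ) (c : Fin d → Fin m → ℂ),
      (∀ i j, ip (e i) (e j) = if i = j then 1 else 0) ∧
      v = ∑ j, prodVec (e j) (c j) := by
  classical
  obtain ⟨a, b, rfl⟩ := hv
  obtain ⟨d, hd, e0, he0, hrep⟩ := ortho_span (E := EuclideanSpace ℂ (Fin n)) (fun i => WithLp.toLp 2 (a i))
  let e : Fin d → Fin n → ℂ := fun j p => e0 j p
  refine ⟨d, hd, e, fun j => ∑ i, ip (e j) (a i) • b i, ?_, ?_⟩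
  · intro i j
    rw [← he0 i j, inner_eq_ip]
  · have key : ∀ (i : Fin k) (p : Fin n), a i p = ∑ j, ip (e j) (a i) * e j p := by
      intro i p
      have h1 := congrArg (fun x : EuclideanSpace ℂ (Fin n) => x p) (hrep i)
      simp only [PiLp.toLp_apply] at h1
      rw [euclid_sum_apply] at h1
      rw [h1]
      refine Finset.sum_congr rfl fun j _ => ?_
      rw [inner_eq_ip]
      rfl
    funext p
    simp only [Finset.sum_apply, prodVec]
    calc ∑ i, a i p.1 * b i p.2 = ∑ i, ∑ j, (ip (e j) (a i) * e j p.1) * b i p.2 := by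
          refine Finset.sum_congr rfl fun i _ => ?_
          rw [key i p.1, Finset.sum_mul]
      _ = ∑ j, e j p.1 * ∑ i, ip (e j) (a i) * b i p.2 := by
          rw [Finset.sum_comm]
          refine Finset.sum_congr rfl fun j _ => ?_
          rw [Finset.mul_sum]
          exact Finset.sum_congr rfl fun i _ => by ring
      _ = ∑ j, e j p.1 * ∑ i, (ip (e j) (a i) • b i) p.2 := by
          exact Finset.sum_congr rfl fun j _ => rfl

lemma cyclic_sum {d t : ℕ} [NeZero d] {M : Type*} [AddCommMonoid M] (f : Fin d → M) :
    ∑ r : Fin d, ∑ s ∈ Finset.range t, f (r + (s : Fin d)) = t • ∑ j, f j := by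
  rw [Finset.sum_comm]
  calc ∑ s ∈ Finset.range t, ∑ r : Fin d, f (r + (s : Fin d))
      = ∑ s ∈ Finset.range t, ∑ j, f j :=
        Finset.sum_congr rfl fun s _ =>
          Fintype.sum_equiv (Equiv.addRight ((s : Fin d))) _ _ (fun r => rfl)
    _ = t • ∑ j, f j := by rw [Finset.sum_const, Finset.card_range]

lemma split_lemma {h k : ℕ} (hh1 : 1 ≤ h) (hhk : h ≤ k)
    {v : Fin n × Fin m → ℂ} (hv : SRle k v) :
    ∃ (N : ℕ) (u : Fin N → (Fin n × Fin m → ℂ)),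
      (∀ r, SRle h (u r)) ∧ v = ∑ r, u r ∧
      ∑ r, nrm (u r) ≤ Real.sqrt ((k : ℝ) / h) * nrm v := by
  classical
  obtain ⟨d, hd, e, c, he, rfl⟩ := ortho_decomp hv
  rcases Nat.eq_zero_or_pos d with hd0 | hd0
  · subst hd0
    refine ⟨0, fun r => 0, fun r => r.elim0, by simp, ?_⟩
    simp only [Finset.univ_eq_empty, Finset.sum_empty]
    exact mul_nonneg (Real.sqrt_nonneg _) (nrm_nonneg _)
  haveI : NeZero d := ⟨hd0.ne'⟩
  set t := min h d with ht
  have ht1 : 1 ≤ t := le_min hh1 hd0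
  have htd : t ≤ d := min_le_right _ _
  set g : Fin d → (Fin n × Fin m → ℂ) := fun j => prodVec (e j) (c j) with hg
  -- basic orthogonality of the g's
  have hgip : ∀ j j', ip (g j) (g j') = if j = j' then ip (c j) (c j') else 0 := by
    intro j j'
    rw [hg]
    simp only [ip_prodVec, he j j']
    by_cases hjj : j = j' <;> simp [hjj]
  set q : Fin d → ℝ := fun j => (ip (c j) (c j)).re with hq
  have hq0 : ∀ j, 0 ≤ q j := fun j => ip_self_re_nonneg _
  -- norm of v
  have hvsq : (ip (∑ j, g j) (∑ j, g j)).re = ∑ j, q j := by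
    rw [ip_sum_left, Complex.re_sum]
    refine Finset.sum_congr rfl fun j _ => ?_
    rw [ip_sum_right,
      Finset.sum_eq_single j (fun j' _ hj' => by rw [hgip j j', if_neg (Ne.symm hj')])
        (fun hj => absurd (Finset.mem_univ j) hj),
      hgip, if_pos rfl]
  -- the pieces
  set w : Fin d → (Fin n × Fin m → ℂ) :=
    fun r => ∑ s ∈ Finset.range t, g (r + (s : Fin d)) with hw
  set u : Fin d → (Fin n × Fin m → ℂ) := fun r => ((t : ℂ))⁻¹ • w r with hu
  have htC : ((t : ℂ)) ≠ 0 := by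
    simp only [ne_eq, Nat.cast_eq_zero]; omega
  refine ⟨d, u, ?_, ?_, ?_⟩
  · -- Schmidt rank of each piece
    intro r
    refine SRle_mono (min_le_left h d) ?_
    refine SRle_smul _ ⟨fun s => e (r + ((s : ℕ) : Fin d)), fun s => c (r + ((s : ℕ) : Fin d)), ?_⟩
    rw [hw]
    exact (Fin.sum_univ_eq_sum_range (fun s => prodVec (e (r + (s : Fin d))) (c (r + (s : Fin d)))) t).symm
  · -- sum of pieces is v
    rw [hu, ← Finset.smul_sum, hw, cyclic_sum g, ← Nat.cast_smul_eq_nsmul ℂ, smul_smul,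
      inv_mul_cancel₀ htC, one_smul]
  · -- the norm bound
    have hwsq : ∀ r, (ip (w r) (w r)).re = ∑ s ∈ Finset.range t, q (r + (s : Fin d)) := by
      intro r
      rw [hw, ip_sum_left, Complex.re_sum]
      refine Finset.sum_congr rfl fun s hs => ?_
      rw [ip_sum_right,
        Finset.sum_eq_single s (fun s' hs' hss => ?_) (fun hs' => absurd hs hs'),
        hgip, if_pos rfl]
      · rw [hgip, if_neg]
        intro hEq
        apply hss
        have h1 : ((s : Fin d) : ℕ) = s := Fin.val_cast_of_lt (lt_of_lt_of_le (Finset.mem_range.1 hs) htd)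
        have h2 : ((s' : Fin d) : ℕ) = s' := Fin.val_cast_of_lt (lt_of_lt_of_le (Finset.mem_range.1 hs') htd)
        have h3 : (s' : Fin d) = (s : Fin d) := by
          exact (add_right_injective r hEq).symm
        rw [← h2, ← h1, h3]
    have hnrmu : ∀ r, nrm (u r) = (t : ℝ)⁻¹ * Real.sqrt (∑ s ∈ Finset.range t, q (r + (s : Fin d))) := by
      intro r
      rw [hu]
      simp only
      rw [nrm_smul, norm_inv, Complex.norm_natCast, nrm, hwsq]
    have hQ0 : ∀ r, 0 ≤ ∑ s ∈ Finset.range t, q (r + (s : Fin d)) :=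
      fun r => Finset.sum_nonneg fun s _ => hq0 _
    -- Cauchy-Schwarz
    have hCS : ∑ r : Fin d, Real.sqrt (∑ s ∈ Finset.range t, q (r + (s : Fin d)))
        ≤ Real.sqrt ((d : ℝ) * (t * ∑ j, q j)) := by
      rw [Real.le_sqrt (Finset.sum_nonneg fun r _ => Real.sqrt_nonneg _)]
      · calc (∑ r : Fin d, Real.sqrt (∑ s ∈ Finset.range t, q (r + (s : Fin d)))) ^ 2
            ≤ (Finset.univ.card : ℝ) * ∑ r : Fin d, Real.sqrt (∑ s ∈ Finset.range t, q (r + (s : Fin d))) ^ 2 :=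
              sq_sum_le_card_mul_sum_sq
          _ = (d : ℝ) * ∑ r : Fin d, ∑ s ∈ Finset.range t, q (r + (s : Fin d)) := by
              rw [Finset.card_univ, Fintype.card_fin]
              congr 1
              exact Finset.sum_congr rfl fun r _ => Real.sq_sqrt (hQ0 r)
          _ = (d : ℝ) * (t * ∑ j, q j) := by
              rw [cyclic_sum q, nsmul_eq_mul]
      · exact mul_nonneg (Nat.cast_nonneg d)
          (mul_nonneg (Nat.cast_nonneg t) (Finset.sum_nonneg fun j _ => hq0 j))
    have key : (d : ℝ) / t ≤ (k : ℝ) / h := by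
      rw [div_le_div_iff₀ (Nat.cast_pos.mpr (by omega)) (Nat.cast_pos.mpr (by omega))]
      have : d * h ≤ k * t := by
        rcases le_total h d with hcase | hcase
        · have : t = h := min_eq_left hcase
          rw [this]
          exact Nat.mul_le_mul_right h hd
        · have : t = d := min_eq_right hcase
          rw [this, Nat.mul_comm d h]
          exact Nat.mul_le_mul_right d hhk
      exact_mod_cast this
    calc ∑ r, nrm (u r)
        = (t : ℝ)⁻¹ * ∑ r : Fin d, Real.sqrt (∑ s ∈ Finset.range t, q (r + (s : Fin d))) := by
          rw [Finset.mul_sum]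
          exact Finset.sum_congr rfl fun r _ => hnrmu r
      _ ≤ (t : ℝ)⁻¹ * Real.sqrt ((d : ℝ) * (t * ∑ j, q j)) := by
          refine mul_le_mul_of_nonneg_left hCS (by positivity)
      _ = Real.sqrt ((d : ℝ) / t * ∑ j, q j) := by
          have h0 : (0:ℝ) < t := Nat.cast_pos.mpr (by omega)
          rw [show (d : ℝ) * ((t : ℝ) * ∑ j, q j) = ((t:ℝ))^2 * ((d:ℝ)/t * ∑ j, q j) by
            field_simp]
          rw [Real.sqrt_mul (by positivity), Real.sqrt_sq h0.le, ← mul_assoc,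
            inv_mul_cancel₀ h0.ne', one_mul]
      _ ≤ Real.sqrt ((k : ℝ) / h) * nrm (∑ j, g j) := by
          rw [nrm, hvsq, ← Real.sqrt_mul (by positivity)]
          refine Real.sqrt_le_sqrt ?_
          refine mul_le_mul_of_nonneg_right key (Finset.sum_nonneg fun j _ => hq0 j)

lemma coord_le_nrm (v : Fin n × Fin m → ℂ) (p : Fin n × Fin m) :
    ‖v p‖ ≤ nrm v := by
  rw [nrm, ip_self_re, ← Real.sqrt_sq (norm_nonneg (v p)), Complex.sq_norm]
  exact Real.sqrt_le_sqrt (Finset.single_le_sum (fun q _ => Complex.normSq_nonneg (v q))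
    (Finset.mem_univ p))

lemma mulVec_sum {κ : Type*} (X : Matrix (Fin n × Fin m) (Fin n × Fin m) ℂ)
    (s : Finset κ) (f : κ → (Fin n × Fin m → ℂ)) :
    X.mulVec (∑ i ∈ s, f i) = ∑ i ∈ s, X.mulVec (f i) := by
  classical
  induction s using Finset.induction with
  | empty => simp [Matrix.mulVec_zero]
  | insert _ _ hx ih => rw [Finset.sum_insert hx, Finset.sum_insert hx, Matrix.mulVec_add, ih]

lemma opSet_bddAbove (k : ℕ) (X : Matrix (Fin n × Fin m) (Fin n × Fin m) ℂ) :
    BddAbove {r | ∃ v w, nrm v = 1 ∧ nrm w = 1 ∧ SRle k v ∧ SRle k w ∧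
      r = ‖ip w (X.mulVec v)‖} := by
  refine ⟨∑ p, ∑ q, ‖X p q‖, ?_⟩
  rintro r ⟨v, w, hv, hw, _, _, rfl⟩
  calc ‖ip w (X.mulVec v)‖
      ≤ ∑ p, ‖star (w p) * X.mulVec v p‖ := norm_sum_le _ _
    _ ≤ ∑ p, ∑ q, ‖X p q‖ := by
        refine Finset.sum_le_sum fun p _ => ?_
        rw [norm_mul]
        calc ‖star (w p)‖ * ‖X.mulVec v p‖
            ≤ 1 * ‖X.mulVec v p‖ := by
              refine mul_le_mul_of_nonneg_right ?_ (norm_nonneg _)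
              rw [show star (w p) = (starRingEnd ℂ) (w p) from rfl, Complex.norm_conj]
              exact hw ▸ coord_le_nrm w p
          _ = ‖∑ q, X p q * v q‖ := by rw [one_mul]; rfl
          _ ≤ ∑ q, ‖X p q * v q‖ := norm_sum_le _ _
          _ ≤ ∑ q, ‖X p q‖ := by
              refine Finset.sum_le_sum fun q _ => ?_
              rw [norm_mul]
              calc ‖X p q‖ * ‖v q‖
                  ≤ ‖X p q‖ * 1 := by
                    refine mul_le_mul_of_nonneg_left ?_ (norm_nonneg _)
                    exact hv ▸ coord_le_nrm v q
                _ = ‖X p q‖ := mul_one _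

lemma opSet_nonempty {k : ℕ} (hk : 1 ≤ k) (hn : 1 ≤ n) (hm : 1 ≤ m)
    (X : Matrix (Fin n × Fin m) (Fin n × Fin m) ℂ) :
    Set.Nonempty {r | ∃ v w, nrm v = 1 ∧ nrm w = 1 ∧ SRle k v ∧ SRle k w ∧
      r = ‖ip w (X.mulVec v)‖} := by
  classical
  set e1 : Fin n → ℂ := fun p => if p = ⟨0, hn⟩ then 1 else 0 with he1
  set f1 : Fin m → ℂ := fun q => if q = ⟨0, hm⟩ then 1 else 0 with hf1
  set v : Fin n × Fin m → ℂ := prodVec e1 f1 with hv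
  have h1 : ip e1 e1 = 1 := by
    rw [ip, he1]
    simp [apply_ite, Finset.sum_ite_eq']
  have h2 : ip f1 f1 = 1 := by
    rw [ip, hf1]
    simp [apply_ite, Finset.sum_ite_eq']
  have hnrm : nrm v = 1 := by
    rw [nrm, hv, ip_prodVec, h1, h2]
    simp
  have hsr : SRle k v := by
    refine SRle_mono hk ⟨fun _ => e1, fun _ => f1, ?_⟩
    rw [hv]
    simp [Fin.sum_univ_one]
  exact ⟨_, v, v, hnrm, hnrm, hsr, hsr, rfl⟩

lemma opNorm_nonneg {k : ℕ} (hk : 1 ≤ k) (hn : 1 ≤ n) (hm : 1 ≤ m)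
    (X : Matrix (Fin n × Fin m) (Fin n × Fin m) ℂ) : 0 ≤ opNorm k X := by
  obtain ⟨r, hr⟩ := opSet_nonempty hk hn hm X
  have h0 : 0 ≤ r := by
    obtain ⟨v, w, _, _, _, _, rfl⟩ := hr
    exact norm_nonneg _
  exact h0.trans (le_csSup (opSet_bddAbove k X) hr)

lemma ip_bound {h : ℕ} (X : Matrix (Fin n × Fin m) (Fin n × Fin m) ℂ)
    {v w : Fin n × Fin m → ℂ} (hv : SRle h v) (hw : SRle h w) :
    ‖ip w (X.mulVec v)‖ ≤ opNorm h X * nrm w * nrm v := by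
  have hnrm0 : nrm (0 : Fin n × Fin m → ℂ) = 0 := by simp [nrm, ip]
  rcases eq_or_ne (nrm v) 0 with hv0 | hv0
  · rw [eq_zero_of_nrm_eq_zero hv0, Matrix.mulVec_zero]
    have h9 : ip w 0 = 0 := by simp [ip]
    rw [h9, norm_zero, hnrm0, mul_zero]
  rcases eq_or_ne (nrm w) 0 with hw0 | hw0
  · rw [eq_zero_of_nrm_eq_zero hw0]
    have h9 : ip 0 (X.mulVec v) = 0 := by simp [ip]
    rw [h9, norm_zero, hnrm0, mul_zero, zero_mul]
  have hvpos : 0 < nrm v := lt_of_le_of_ne (nrm_nonneg v) (Ne.symm hv0)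
  have hwpos : 0 < nrm w := lt_of_le_of_ne (nrm_nonneg w) (Ne.symm hw0)
  set cv : ℂ := (((nrm v)⁻¹ : ℝ) : ℂ) with hcv
  set cw : ℂ := (((nrm w)⁻¹ : ℝ) : ℂ) with hcw
  have hav : ‖cv‖ = (nrm v)⁻¹ := by
    rw [hcv, Complex.norm_real, Real.norm_eq_abs, abs_of_nonneg (by positivity)]
  have haw : ‖cw‖ = (nrm w)⁻¹ := by
    rw [hcw, Complex.norm_real, Real.norm_eq_abs, abs_of_nonneg (by positivity)]
  have hv1 : nrm (cv • v) = 1 := by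
    rw [nrm_smul, hav, inv_mul_cancel₀ hv0]
  have hw1 : nrm (cw • w) = 1 := by
    rw [nrm_smul, haw, inv_mul_cancel₀ hw0]
  have hmem : ‖ip (cw • w) (X.mulVec (cv • v))‖
      ∈ {r | ∃ v w, nrm v = 1 ∧ nrm w = 1 ∧ SRle h v ∧ SRle h w ∧
        r = ‖ip w (X.mulVec v)‖} :=
    ⟨cv • v, cw • w, hv1, hw1, SRle_smul cv hv, SRle_smul cw hw, rfl⟩
  have hle : ‖ip (cw • w) (X.mulVec (cv • v))‖ ≤ opNorm h X :=
    le_csSup (opSet_bddAbove h X) hmem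
  have heq : ‖ip (cw • w) (X.mulVec (cv • v))‖
      = (nrm w)⁻¹ * (nrm v)⁻¹ * ‖ip w (X.mulVec v)‖ := by
    rw [Matrix.mulVec_smul, ip_smul_left, ip_smul_right, norm_mul, norm_mul]
    rw [hav]
    have h8 : ‖star cw‖ = (nrm w)⁻¹ := by
      rw [show star cw = (starRingEnd ℂ) cw from rfl, Complex.norm_conj, haw]
    rw [h8]
    ring
  rw [heq] at hle
  have := mul_le_mul_of_nonneg_left hle (by positivity : (0:ℝ) ≤ nrm w * nrm v)
  calc ‖ip w (X.mulVec v)‖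
      = (nrm w * nrm v) * ((nrm w)⁻¹ * (nrm v)⁻¹ * ‖ip w (X.mulVec v)‖) := by
        field_simp
    _ ≤ (nrm w * nrm v) * opNorm h X := this
    _ = opNorm h X * nrm w * nrm v := by ring

end Vec
end StmtAux

/-- equivalence of the k-th operator norms. -/
theorem stmt10 {n m h k : ℕ} (hmn : m ≤ n) (hh1 : 1 ≤ h) (hhk : h ≤ k) (hkm : k ≤ m)
    (X : Matrix (Fin n × Fin m) (Fin n × Fin m) ℂ) :
    opNorm h X ≤ opNorm k X ∧ opNorm k X ≤ ((k : ℝ) / h) * opNorm h X := by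
  have hm1 : 1 ≤ m := le_trans (le_trans hh1 hhk) hkm
  have hn1 : 1 ≤ n := le_trans hm1 hmn
  have hM : 0 ≤ opNorm h X := opNorm_nonneg hh1 hn1 hm1 X
  have hs0 : (0:ℝ) ≤ Real.sqrt ((k : ℝ) / h) := Real.sqrt_nonneg _
  constructor
  · refine csSup_le_csSup (opSet_bddAbove k X) (opSet_nonempty hh1 hn1 hm1 X) ?_
    rintro r ⟨v, w, hv, hw, hsv, hsw, hr⟩
    exact ⟨v, w, hv, hw, SRle_mono hhk hsv, SRle_mono hhk hsw, hr⟩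
  · refine Real.sSup_le ?_ (mul_nonneg (by positivity) hM)
    rintro r ⟨v, w, hv, hw, hsv, hsw, rfl⟩
    obtain ⟨N, u, hu_sr, hveq, hu_nrm⟩ := split_lemma hh1 hhk hsv
    obtain ⟨N', u', hu'_sr, hweq, hu'_nrm⟩ := split_lemma hh1 hhk hsw
    rw [hv, mul_one] at hu_nrm
    rw [hw, mul_one] at hu'_nrm
    have hsum_nonneg : (0:ℝ) ≤ ∑ i, nrm (u i) := Finset.sum_nonneg fun i _ => nrm_nonneg _
    have hsum'_nonneg : (0:ℝ) ≤ ∑ j, nrm (u' j) := Finset.sum_nonneg fun j _ => nrm_nonneg _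
    calc ‖ip w (X.mulVec v)‖
        = ‖∑ j, ∑ i, ip (u' j) (X.mulVec (u i))‖ := by
          rw [hweq, hveq, mulVec_sum, ip_sum_left]
          congr 1
          exact Finset.sum_congr rfl fun j _ => ip_sum_right _ _ _
      _ ≤ ∑ j, ‖∑ i, ip (u' j) (X.mulVec (u i))‖ := norm_sum_le _ _
      _ ≤ ∑ j, ∑ i, ‖ip (u' j) (X.mulVec (u i))‖ :=
          Finset.sum_le_sum fun j _ => norm_sum_le _ _
      _ ≤ ∑ j, ∑ i, opNorm h X * nrm (u' j) * nrm (u i) :=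
          Finset.sum_le_sum fun j _ => Finset.sum_le_sum fun i _ =>
            ip_bound X (hu_sr i) (hu'_sr j)
      _ = opNorm h X * (∑ j, nrm (u' j)) * (∑ i, nrm (u i)) := by
          rw [Finset.sum_comm]
          have step1 : ∀ y, ∑ x, opNorm h X * nrm (u' x) * nrm (u y)
              = (opNorm h X * ∑ x, nrm (u' x)) * nrm (u y) := by
            intro y
            rw [Finset.mul_sum, Finset.sum_mul]
          rw [Finset.sum_congr rfl fun y _ => step1 y, ← Finset.mul_sum]
      _ ≤ opNorm h X * Real.sqrt ((k : ℝ) / h) * Real.sqrt ((k : ℝ) / h) := by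
          refine mul_le_mul (mul_le_mul_of_nonneg_left hu'_nrm hM) hu_nrm hsum_nonneg
            (mul_nonneg hM hs0)
      _ = ((k : ℝ) / h) * opNorm h X := by
          rw [mul_assoc, Real.mul_self_sqrt (by positivity), mul_comm]
end
end
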